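/- Let G be a subcubic graph (every vertex has degree at most 3) containing an induced subgraph H isomorphic to the 'house' (the complement of the path P5 on 5 vertices). Let T be the set of three vertices of H forming a triangle. Then α(G - T) = α(G) - 1. -/

import Mathlib

/-- A set of vertices is independent if no two of its members are adjacent. -/
def IsIndepSet {V : Type*} (G : SimpleGraph V) (s : Set V) : Prop :=
  s.Pairwise fun a b => ¬ G.Adj a b

/-- The independence number: the largest cardinality of an independent set. -/
noncomputable def indepNum {V : Type*} (G : SimpleGraph V) : ℕ :=
  sSup {n | ∃ s : Finset V, IsIndepSet G ↑s ∧ s.card = n}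
/-- Adjacency of the house graph (complement of `P₅`): a 4-cycle `0,1,2,3`
plus vertex `4` adjacent to the adjacent pair `0,1`; its unique triangle is `{0,1,4}`. -/
def houseAdj (i j : Fin 5) : Prop :=
  (i = 0 ∧ j = 1) ∨ (i = 1 ∧ j = 0) ∨
  (i = 1 ∧ j = 2) ∨ (i = 2 ∧ j = 1) ∨
  (i = 2 ∧ j = 3) ∨ (i = 3 ∧ j = 2) ∨
  (i = 3 ∧ j = 0) ∨ (i = 0 ∧ j = 3) ∨
  (i = 0 ∧ j = 4) ∨ (i = 4 ∧ j = 0) ∨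
  (i = 1 ∧ j = 4) ∨ (i = 4 ∧ j = 1)

lemma indep_bdd {V : Type*} [Fintype V] (G : SimpleGraph V) :
    BddAbove {n | ∃ s : Finset V, IsIndepSet G ↑s ∧ s.card = n} :=
  ⟨Fintype.card V, fun n ⟨s, _, hc⟩ => hc ▸ s.card_le_univ⟩

lemma le_indepNum' {V : Type*} [Fintype V] (G : SimpleGraph V) {s : Finset V}
    (h : IsIndepSet G ↑s) : s.card ≤ indepNum G :=
  le_csSup (indep_bdd G) ⟨s, h, rfl⟩

lemma exists_indep {V : Type*} [Fintype V] (G : SimpleGraph V) :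
    ∃ s : Finset V, IsIndepSet G ↑s ∧ s.card = indepNum G := by
  have h := Nat.sSup_mem (s := {n | ∃ s : Finset V, IsIndepSet G ↑s ∧ s.card = n})
    ⟨0, ∅, by simp [IsIndepSet], rfl⟩ (indep_bdd G)
  simpa [indepNum] using h

/-- House reduction: deleting the triangle of an induced house in a subcubic graph
decreases the independence number by exactly 1. -/
theorem house_reduction {V : Type*} [Fintype V] (G : SimpleGraph V) [DecidableRel G.Adj]
    (hdeg : ∀ v, G.degree v ≤ 3)
    (f : Fin 5 → V) (hf : Function.Injective f)
    (hind : ∀ i j, G.Adj (f i) (f j) ↔ houseAdj i j) :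
    indepNum (G.induce {v | v ≠ f 0 ∧ v ≠ f 1 ∧ v ≠ f 4}) = indepNum G - 1 := by
  classical
  set P : Set V := {v | v ≠ f 0 ∧ v ≠ f 1 ∧ v ≠ f 4} with hPdef
  have hne : ∀ i j : Fin 5, i ≠ j → f i ≠ f j := fun i j h hc => h (hf hc)
  have hadj : ∀ i j : Fin 5, houseAdj i j → G.Adj (f i) (f j) := fun i j h => (hind i j).2 h
  -- neighbors of f 0 are exactly f1, f3, f4
  have key : ∀ (i a b c : Fin 5), G.Adj (f i) (f a) → G.Adj (f i) (f b) → G.Adj (f i) (f c) →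
      a ≠ b → a ≠ c → b ≠ c → ∀ w, G.Adj (f i) w → w = f a ∨ w = f b ∨ w = f c := by
    intro i a b c h1 h2 h3 hab hac hbc w hw
    have hsub : ({f a, f b, f c} : Finset V) ⊆ G.neighborFinset (f i) := by
      intro x hx
      simp only [Finset.mem_insert, Finset.mem_singleton] at hx
      rcases hx with rfl | rfl | rfl <;> simp [SimpleGraph.mem_neighborFinset, h1, h2, h3]
    have hcard3 : ({f a, f b, f c} : Finset V).card = 3 := by
      rw [Finset.card_insert_of_notMem (by simp [hne a b hab, hne a c hac]),
        Finset.card_insert_of_notMem (by simp [hne b c hbc]), Finset.card_singleton]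
    have heq : ({f a, f b, f c} : Finset V) = G.neighborFinset (f i) :=
      Finset.eq_of_subset_of_card_le hsub (by rw [hcard3]; exact hdeg (f i))
    have : w ∈ G.neighborFinset (f i) := (SimpleGraph.mem_neighborFinset _ _ _).2 hw
    rw [← heq] at this
    simpa using this
  have key0 : ∀ w, G.Adj (f 0) w → w = f 1 ∨ w = f 3 ∨ w = f 4 :=
    key 0 1 3 4 (hadj 0 1 (by unfold houseAdj; decide)) (hadj 0 3 (by unfold houseAdj; decide))
      (hadj 0 4 (by unfold houseAdj; decide)) (by decide) (by decide) (by decide)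
  have key1 : ∀ w, G.Adj (f 1) w → w = f 0 ∨ w = f 2 ∨ w = f 4 :=
    key 1 0 2 4 (hadj 1 0 (by unfold houseAdj; decide)) (hadj 1 2 (by unfold houseAdj; decide))
      (hadj 1 4 (by unfold houseAdj; decide)) (by decide) (by decide) (by decide)
  -- direction A : indepNum G' + 1 ≤ indepNum G
  have dirA : indepNum (G.induce P) + 1 ≤ indepNum G := by
    obtain ⟨s', hs', hcard'⟩ := exists_indep (G.induce P)
    set t : Finset V := s'.map (Function.Embedding.subtype _) with htdef
    have htmem : ∀ x ∈ t, x ∈ P := by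
      intro x hx
      simp only [htdef, Finset.mem_map, Function.Embedding.coe_subtype] at hx
      obtain ⟨⟨y, hy⟩, _, rfl⟩ := hx
      exact hy
    have htind : IsIndepSet G ↑t := by
      intro a ha b hb hab
      simp only [Finset.coe_map, Set.mem_image, Finset.mem_coe, htdef,
        Function.Embedding.coe_subtype] at ha hb
      obtain ⟨⟨a', ha'⟩, hma, rfl⟩ := ha
      obtain ⟨⟨b', hb'⟩, hmb, rfl⟩ := hb
      have := hs' (by simpa using hma) (by simpa using hmb)
        (fun h => hab (congrArg _ h))
      simpa using this
    have htcard : t.card = indepNum (G.induce P) := by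
      rw [htdef, Finset.card_map, hcard']
    -- f 2 and f 3 not both in t
    have h23 : f 2 ∉ t ∨ f 3 ∉ t := by
      by_contra h
      push_neg at h
      exact htind (by simpa using h.1) (by simpa using h.2) (hne 2 3 (by decide))
        (hadj 2 3 (by unfold houseAdj; decide))
    -- choose vertex v ∈ {f 0, f 1} to insert
    obtain ⟨v, hvP, hvadj⟩ : ∃ v, v ∉ P ∧ ∀ w ∈ t, ¬ G.Adj v w := by
      rcases h23 with h2 | h3
      · refine ⟨f 1, fun hc => hc.2.1 rfl, fun w hw hadjw => ?_⟩
        rcases key1 w hadjw with rfl | rfl | rfl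
        · exact (htmem _ hw).1 rfl
        · exact h2 hw
        · exact (htmem _ hw).2.2 rfl
      · refine ⟨f 0, fun hc => hc.1 rfl, fun w hw hadjw => ?_⟩
        rcases key0 w hadjw with rfl | rfl | rfl
        · exact (htmem _ hw).2.1 rfl
        · exact h3 hw
        · exact (htmem _ hw).2.2 rfl
    have hvnt : v ∉ t := fun h => hvP (htmem _ h)
    have hins : IsIndepSet G ↑(insert v t) := by
      rw [Finset.coe_insert]
      have hsym : Symmetric (fun a b : V => ¬ G.Adj a b) := fun a b h had => h had.symm
      haveI : Std.Symm (fun a b : V => ¬ G.Adj a b) := ⟨hsym⟩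
      refine (Set.pairwise_insert_of_symm (r := fun a b : V => ¬ G.Adj a b)).2 ⟨htind, ?_⟩
      intro b hb _
      exact hvadj b (by simpa using hb)
    have := le_indepNum' G hins
    rwa [Finset.card_insert_of_notMem hvnt, htcard] at this
  -- direction B : indepNum G - 1 ≤ indepNum G'
  have dirB : indepNum G ≤ indepNum (G.induce P) + 1 := by
    obtain ⟨s, hs, hcard⟩ := exists_indep G
    set T : Finset V := {f 0, f 1, f 4} with hTdef
    have hinter : (s ∩ T).card ≤ 1 := by
      rw [Finset.card_le_one]
      intro a ha b hb
      by_contra hab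
      have hadjab : G.Adj a b := by
        have ha' := Finset.mem_of_mem_inter_right ha
        have hb' := Finset.mem_of_mem_inter_right hb
        simp only [hTdef, Finset.mem_insert, Finset.mem_singleton] at ha' hb'
        rcases ha' with rfl | rfl | rfl <;> rcases hb' with rfl | rfl | rfl <;>
          first
          | exact absurd rfl hab
          | exact hadj _ _ (by unfold houseAdj; decide)
      exact hs (Finset.mem_coe.2 (Finset.mem_of_mem_inter_left ha))
        (Finset.mem_coe.2 (Finset.mem_of_mem_inter_left hb)) hab hadjab
    have hsd : s.card - 1 ≤ (s \ T).card := by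
      have : s \ T = s \ (s ∩ T) := (Finset.sdiff_inter_self_left s T).symm
      rw [this, Finset.card_sdiff_of_subset Finset.inter_subset_left]
      omega
    set s₃ : Finset ↥P := (s \ T).subtype (· ∈ P) with hs3def
    have hs3card : s₃.card = (s \ T).card := by
      rw [hs3def, Finset.card_subtype, Finset.filter_true_of_mem]
      intro x hx
      have hxT := (Finset.mem_sdiff.1 hx).2
      simp only [hTdef, Finset.mem_insert, Finset.mem_singleton, not_or] at hxT
      exact ⟨hxT.1, hxT.2.1, hxT.2.2⟩
    have hs3ind : IsIndepSet (G.induce P) ↑s₃ := by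
      rintro ⟨a, haP⟩ ha ⟨b, hbP⟩ hb hab
      simp only [Finset.mem_coe, hs3def, Finset.mem_subtype] at ha hb
      have : ¬ G.Adj a b := hs
        (Finset.mem_coe.2 (Finset.mem_sdiff.1 ha).1)
        (Finset.mem_coe.2 (Finset.mem_sdiff.1 hb).1)
        (fun h => hab (Subtype.ext h))
      simpa using this
    have := le_indepNum' (G.induce P) hs3ind
    omega
  omega
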